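/- arXiv:1504.07814 — 2 statements merged into one kernel-verified Lean document; each statement's English description precedes it below -/
import Mathlib

section
/- Let V = Σ_{i=0}^{d} n_i·Sym^{2i}(ℂ²) and W = Σ_{i=1}^{d} m_i·Sym^{2i−1}(ℂ²) be two finite-dimensional representations of SU(2), and set a_i = Σ_{j=i}^{d} (n_j − m_j) for 1 ≤ i ≤ d. Assume a_i ≤ 0 and a_i + m_i ≥ 0 for all 1 ≤ i ≤ d (equivalently, W ≥ V⁻ and V ≥ W⁻ in the Young order on partitions). Then dim(V⊗V)[0] + dim(W⊗W)[0] − 2·dim(V⊗W)[1] ≤ (m_1² + ⋯ + m_d²) + (a_1 + n_0)². -/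
/-- `wtDim ℓ k` is the dimension of the `k`-weight space (for the standard maximal torus
`S¹ ⊂ SU(2)`, acting by `z ↦ z^k`) of the representation `⊕ᵢ ℓ i · Sym^i(ℂ²)` of `SU(2)`
encoded by its multiplicity function `ℓ : ℕ → ℕ`:
`dim E[k] = Σ_{i ≥ |k|, i ≡ k (mod 2)} ℓ i`. -/
noncomputable def wtDim (ℓ : ℕ → ℕ) (k : ℤ) : ℕ :=
  ∑ᶠ i : ℕ, if k.natAbs ≤ i ∧ k % 2 = (i : ℤ) % 2 then ℓ i else 0

/-- `tensorWtDim ℓ₁ ℓ₂ k` is the dimension of the `k`-weight space of the tensor product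
of the `SU(2)`-representations encoded by `ℓ₁` and `ℓ₂`:
`dim (E⊗F)[k] = Σ_{j ∈ ℤ} dim E[j] · dim F[k-j]`. -/
noncomputable def tensorWtDim (ℓ₁ ℓ₂ : ℕ → ℕ) (k : ℤ) : ℕ :=
  ∑ᶠ j : ℤ, wtDim ℓ₁ j * wtDim ℓ₂ (k - j)

/-- Multiplicity function of `V = Σ_{i=0}^{d} n_i · Sym^{2i}(ℂ²)`
(trivial central character). -/
def evenRep (d : ℕ) (n : ℕ → ℕ) : ℕ → ℕ :=
  fun j => if j % 2 = 0 ∧ j / 2 ≤ d then n (j / 2) else 0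

/-- Multiplicity function of `W = Σ_{i=1}^{d} m_i · Sym^{2i-1}(ℂ²)`
(non-trivial central character). -/
def oddRep (d : ℕ) (m : ℕ → ℕ) : ℕ → ℕ :=
  fun j => if j % 2 = 1 ∧ (j + 1) / 2 ≤ d then m ((j + 1) / 2) else 0

/-- The quantity `a_i = Σ_{j=i}^{d} (n_j − m_j)` (an empty sum when `i > d`). -/
def aCoeff (d : ℕ) (n m : ℕ → ℕ) (i : ℕ) : ℤ :=
  ∑ j ∈ Finset.Icc i d, ((n j : ℤ) - (m j : ℤ))

lemma wtDim_evenRep (d : ℕ) (n : ℕ → ℕ) (k : ℤ) :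
    wtDim (evenRep d n) k =
      if k % 2 = 0 then ∑ j ∈ Finset.Icc (k.natAbs / 2) d, n j else 0 := by
  unfold wtDim
  by_cases hk : k % 2 = 0
  · rw [if_pos hk,
      finsum_eq_finset_sum_of_support_subset _
        (s := (Finset.Icc (k.natAbs / 2) d).image (2 * ·)) ?_]
    · rw [Finset.sum_image (by intro x _ y _ h; beta_reduce at h; omega)]
      refine Finset.sum_congr rfl (fun j hj => ?_)
      simp only [Finset.mem_Icc] at hj
      rw [if_pos ⟨by omega, by push_cast; omega⟩]
      simp only [evenRep]
      rw [if_pos ⟨by omega, by omega⟩]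
      congr 1
      omega
    · intro i hi
      simp only [Function.mem_support] at hi
      have h1 : k.natAbs ≤ i ∧ k % 2 = (i : ℤ) % 2 := by
        by_contra hc; rw [if_neg hc] at hi; exact hi rfl
      rw [if_pos h1] at hi
      have h2 : i % 2 = 0 ∧ i / 2 ≤ d := by
        by_contra hc; simp only [evenRep, if_neg hc] at hi; exact hi rfl
      simp only [Finset.coe_image, Set.mem_image, Finset.mem_coe, Finset.mem_Icc]
      exact ⟨i / 2, ⟨by omega, by omega⟩, by omega⟩
  · rw [if_neg hk]
    have h0 : ∀ i : ℕ,
        (if k.natAbs ≤ i ∧ k % 2 = (i : ℤ) % 2 then evenRep d n i else 0) = 0 := by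
      intro i
      split
      · next h =>
        simp only [evenRep]
        rw [if_neg]
        intro hc
        omega
      · rfl
    rw [finsum_congr h0, finsum_zero]

lemma wtDim_oddRep (d : ℕ) (m : ℕ → ℕ) (k : ℤ) :
    wtDim (oddRep d m) k =
      if k % 2 = 1 then ∑ j ∈ Finset.Icc ((k.natAbs + 1) / 2) d, m j else 0 := by
  unfold wtDim
  by_cases hk : k % 2 = 1
  · have hc1 : 1 ≤ (k.natAbs + 1) / 2 := by omega
    rw [if_pos hk,
      finsum_eq_finset_sum_of_support_subset _
        (s := (Finset.Icc ((k.natAbs + 1) / 2) d).image (fun j => 2 * j - 1)) ?_]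
    · rw [Finset.sum_image (by intro x hx y hy h; simp only [Finset.mem_coe, Finset.mem_Icc] at hx hy; beta_reduce at h; omega)]
      refine Finset.sum_congr rfl (fun j hj => ?_)
      simp only [Finset.mem_Icc] at hj
      rw [if_pos ⟨by omega, by omega⟩]
      simp only [oddRep]
      rw [if_pos ⟨by omega, by omega⟩]
      congr 1
      omega
    · intro i hi
      simp only [Function.mem_support] at hi
      have h1 : k.natAbs ≤ i ∧ k % 2 = (i : ℤ) % 2 := by
        by_contra hc; rw [if_neg hc] at hi; exact hi rfl
      rw [if_pos h1] at hi
      have h2 : i % 2 = 1 ∧ (i + 1) / 2 ≤ d := by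
        by_contra hc; simp only [oddRep, if_neg hc] at hi; exact hi rfl
      simp only [Finset.coe_image, Set.mem_image, Finset.mem_coe, Finset.mem_Icc]
      exact ⟨(i + 1) / 2, ⟨by omega, by omega⟩, by omega⟩
  · rw [if_neg hk]
    have h0 : ∀ i : ℕ,
        (if k.natAbs ≤ i ∧ k % 2 = (i : ℤ) % 2 then oddRep d m i else 0) = 0 := by
      intro i
      split
      · next h =>
        simp only [oddRep]
        rw [if_neg]
        intro hc
        omega
      · rfl
    rw [finsum_congr h0, finsum_zero]

lemma symm_sum (h : ℕ → ℕ) : ∀ d : ℕ,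
    ∑ k ∈ Finset.Icc (-(d : ℤ)) d, h k.natAbs = h 0 + 2 * ∑ k ∈ Finset.Icc 1 d, h k := by
  intro d
  induction d with
  | zero => simp
  | succ d ih =>
    have hs : Finset.Icc (-((d : ℤ) + 1)) ((d : ℤ) + 1)
        = insert (-((d : ℤ) + 1)) (insert ((d : ℤ) + 1) (Finset.Icc (-(d : ℤ)) d)) := by
      ext x; simp only [Finset.mem_Icc, Finset.mem_insert]; omega
    have h1 : ((d : ℤ) + 1) ∉ Finset.Icc (-(d : ℤ)) (d : ℤ) := by
      simp only [Finset.mem_Icc]; omega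
    have h2 : (-((d : ℤ) + 1)) ∉ insert ((d : ℤ) + 1) (Finset.Icc (-(d : ℤ)) (d : ℤ)) := by
      simp only [Finset.mem_insert, Finset.mem_Icc]; omega
    push_cast
    rw [hs, Finset.sum_insert h2, Finset.sum_insert h1, ih,
      Finset.sum_Icc_succ_top (by omega : 1 ≤ d + 1)]
    have e1 : (-((d : ℤ) + 1)).natAbs = d + 1 := by omega
    have e2 : ((d : ℤ) + 1).natAbs = d + 1 := by omega
    rw [e1, e2]
    ring

lemma symm_sum_odd (h : ℕ → ℕ) : ∀ d : ℕ,
    ∑ k ∈ Finset.Icc (1 - (d : ℤ)) d, h (((2 * k - 1).natAbs + 1) / 2)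
      = 2 * ∑ k ∈ Finset.Icc 1 d, h k := by
  intro d
  induction d with
  | zero => simp
  | succ d ih =>
    have hs : Finset.Icc (1 - ((d : ℤ) + 1)) ((d : ℤ) + 1)
        = insert (-(d : ℤ)) (insert ((d : ℤ) + 1) (Finset.Icc (1 - (d : ℤ)) d)) := by
      ext x; simp only [Finset.mem_Icc, Finset.mem_insert]; omega
    have h1 : ((d : ℤ) + 1) ∉ Finset.Icc (1 - (d : ℤ)) (d : ℤ) := by
      simp only [Finset.mem_Icc]; omega
    have h2 : (-(d : ℤ)) ∉ insert ((d : ℤ) + 1) (Finset.Icc (1 - (d : ℤ)) (d : ℤ)) := by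
      simp only [Finset.mem_insert, Finset.mem_Icc]; omega
    push_cast
    rw [hs, Finset.sum_insert h2, Finset.sum_insert h1, ih,
      Finset.sum_Icc_succ_top (by omega : 1 ≤ d + 1)]
    have e1 : ((2 * (-(d : ℤ)) - 1).natAbs + 1) / 2 = d + 1 := by omega
    have e2 : ((2 * ((d : ℤ) + 1) - 1).natAbs + 1) / 2 = d + 1 := by omega
    rw [e1, e2]
    ring

lemma mixed_sum (F : ℕ → ℕ → ℕ) : ∀ d : ℕ,
    ∑ k ∈ Finset.Icc (-(d : ℤ)) d, F k.natAbs (((1 - 2 * k).natAbs + 1) / 2)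
      = ∑ k ∈ Finset.Icc 1 d, F k k + ∑ k ∈ Finset.Icc 0 d, F k (k + 1) := by
  intro d
  induction d with
  | zero => simp
  | succ d ih =>
    have hs : Finset.Icc (-((d : ℤ) + 1)) ((d : ℤ) + 1)
        = insert (-((d : ℤ) + 1)) (insert ((d : ℤ) + 1) (Finset.Icc (-(d : ℤ)) d)) := by
      ext x; simp only [Finset.mem_Icc, Finset.mem_insert]; omega
    have h1 : ((d : ℤ) + 1) ∉ Finset.Icc (-(d : ℤ)) (d : ℤ) := by
      simp only [Finset.mem_Icc]; omega
    have h2 : (-((d : ℤ) + 1)) ∉ insert ((d : ℤ) + 1) (Finset.Icc (-(d : ℤ)) (d : ℤ)) := by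
      simp only [Finset.mem_insert, Finset.mem_Icc]; omega
    push_cast
    rw [hs, Finset.sum_insert h2, Finset.sum_insert h1, ih,
      Finset.sum_Icc_succ_top (by omega : 1 ≤ d + 1),
      Finset.sum_Icc_succ_top (by omega : 0 ≤ d + 1)]
    have e1 : (-((d : ℤ) + 1)).natAbs = d + 1 := by omega
    have e2 : ((d : ℤ) + 1).natAbs = d + 1 := by omega
    have e3 : ((1 - 2 * (-((d : ℤ) + 1))).natAbs + 1) / 2 = d + 2 := by omega
    have e4 : ((1 - 2 * ((d : ℤ) + 1)).natAbs + 1) / 2 = d + 1 := by omega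
    rw [e1, e2, e3, e4]
    ring
lemma tensor_even_even (d : ℕ) (n : ℕ → ℕ) :
    tensorWtDim (evenRep d n) (evenRep d n) 0
      = (∑ j ∈ Finset.Icc 0 d, n j) * (∑ j ∈ Finset.Icc 0 d, n j)
        + 2 * ∑ k ∈ Finset.Icc 1 d, (∑ j ∈ Finset.Icc k d, n j) * (∑ j ∈ Finset.Icc k d, n j) := by
  have hz : ∀ c : ℕ, d < c → (∑ j ∈ Finset.Icc c d, n j) = 0 := fun c hc => by
    rw [Finset.Icc_eq_empty (by omega)]; rfl
  unfold tensorWtDim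
  rw [finsum_eq_finset_sum_of_support_subset _
      (s := (Finset.Icc (-(d : ℤ)) d).image (fun k => 2 * k)) ?_]
  · rw [Finset.sum_image (by intro x _ y _ h; beta_reduce at h; omega)]
    rw [← symm_sum (fun c => (∑ j ∈ Finset.Icc c d, n j) * (∑ j ∈ Finset.Icc c d, n j)) d]
    refine Finset.sum_congr rfl fun k hk => ?_
    rw [wtDim_evenRep, wtDim_evenRep, if_pos (by omega), if_pos (by omega)]
    have e1 : (2 * k).natAbs / 2 = k.natAbs := by omega
    have e2 : (0 - 2 * k).natAbs / 2 = k.natAbs := by omega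
    rw [e1, e2]
  · intro j hj
    simp only [Function.mem_support] at hj
    have hw1 : wtDim (evenRep d n) j ≠ 0 := fun h => hj (by rw [h, zero_mul])
    rw [wtDim_evenRep] at hw1
    have hj2 : j % 2 = 0 := by by_contra hc; rw [if_neg hc] at hw1; exact hw1 rfl
    rw [if_pos hj2] at hw1
    have hle : j.natAbs / 2 ≤ d := by by_contra hc; exact hw1 (hz _ (by omega))
    simp only [Finset.coe_image, Set.mem_image, Finset.mem_coe, Finset.mem_Icc]
    exact ⟨j / 2, ⟨by omega, by omega⟩, by omega⟩

lemma tensor_odd_odd (d : ℕ) (m : ℕ → ℕ) :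
    tensorWtDim (oddRep d m) (oddRep d m) 0
      = 2 * ∑ k ∈ Finset.Icc 1 d, (∑ j ∈ Finset.Icc k d, m j) * (∑ j ∈ Finset.Icc k d, m j) := by
  have hz : ∀ c : ℕ, d < c → (∑ j ∈ Finset.Icc c d, m j) = 0 := fun c hc => by
    rw [Finset.Icc_eq_empty (by omega)]; rfl
  unfold tensorWtDim
  rw [finsum_eq_finset_sum_of_support_subset _
      (s := (Finset.Icc (1 - (d : ℤ)) d).image (fun k => 2 * k - 1)) ?_]
  · rw [Finset.sum_image (by intro x _ y _ h; beta_reduce at h; omega)]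
    rw [← symm_sum_odd (fun c => (∑ j ∈ Finset.Icc c d, m j) * (∑ j ∈ Finset.Icc c d, m j)) d]
    refine Finset.sum_congr rfl fun k hk => ?_
    rw [wtDim_oddRep, wtDim_oddRep, if_pos (by omega), if_pos (by omega)]
    have e2 : ((0 - (2 * k - 1)).natAbs + 1) / 2 = ((2 * k - 1).natAbs + 1) / 2 := by omega
    rw [e2]
  · intro j hj
    simp only [Function.mem_support] at hj
    have hw1 : wtDim (oddRep d m) j ≠ 0 := fun h => hj (by rw [h, zero_mul])
    rw [wtDim_oddRep] at hw1
    have hj2 : j % 2 = 1 := by by_contra hc; rw [if_neg hc] at hw1; exact hw1 rfl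
    rw [if_pos hj2] at hw1
    have hle : (j.natAbs + 1) / 2 ≤ d := by by_contra hc; exact hw1 (hz _ (by omega))
    simp only [Finset.coe_image, Set.mem_image, Finset.mem_coe, Finset.mem_Icc]
    exact ⟨(j + 1) / 2, ⟨by omega, by omega⟩, by omega⟩

lemma tensor_even_odd (d : ℕ) (n m : ℕ → ℕ) :
    tensorWtDim (evenRep d n) (oddRep d m) 1
      = ∑ k ∈ Finset.Icc 1 d, (∑ j ∈ Finset.Icc k d, n j) * (∑ j ∈ Finset.Icc k d, m j)
        + ∑ k ∈ Finset.Icc 0 d, (∑ j ∈ Finset.Icc k d, n j) * (∑ j ∈ Finset.Icc (k + 1) d, m j) := by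
  have hz : ∀ c : ℕ, d < c → (∑ j ∈ Finset.Icc c d, n j) = 0 := fun c hc => by
    rw [Finset.Icc_eq_empty (by omega)]; rfl
  unfold tensorWtDim
  rw [finsum_eq_finset_sum_of_support_subset _
      (s := (Finset.Icc (-(d : ℤ)) d).image (fun k => 2 * k)) ?_]
  · rw [Finset.sum_image (by intro x _ y _ h; beta_reduce at h; omega)]
    rw [← mixed_sum (fun a b => (∑ j ∈ Finset.Icc a d, n j) * (∑ j ∈ Finset.Icc b d, m j)) d]
    refine Finset.sum_congr rfl fun k hk => ?_
    rw [wtDim_evenRep, wtDim_oddRep, if_pos (by omega), if_pos (by omega)]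
    have e1 : (2 * k).natAbs / 2 = k.natAbs := by omega
    rw [e1]
  · intro j hj
    simp only [Function.mem_support] at hj
    have hw1 : wtDim (evenRep d n) j ≠ 0 := fun h => hj (by rw [h, zero_mul])
    rw [wtDim_evenRep] at hw1
    have hj2 : j % 2 = 0 := by by_contra hc; rw [if_neg hc] at hw1; exact hw1 rfl
    rw [if_pos hj2] at hw1
    have hle : j.natAbs / 2 ≤ d := by by_contra hc; exact hw1 (hz _ (by omega))
    simp only [Finset.coe_image, Set.mem_image, Finset.mem_coe, Finset.mem_Icc]
    exact ⟨j / 2, ⟨by omega, by omega⟩, by omega⟩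


lemma telescope_sq (β : ℕ → ℤ) (d : ℕ) :
    ∑ k ∈ Finset.Icc 1 d, (β (k + 1) ^ 2 - β k ^ 2) = β (d + 1) ^ 2 - β 1 ^ 2 := by
  induction d with
  | zero => simp
  | succ d ih => rw [Finset.sum_Icc_succ_top (by omega), ih]; ring

lemma key_ineq (d : ℕ) (α β : ℕ → ℤ) (hβd : β (d + 1) = 0)
    (h : ∀ k, 1 ≤ k → k ≤ d → α k ≤ β k ∧ β (k + 1) ≤ α k) :
    α 0 * α 0 + 2 * ∑ k ∈ Finset.Icc 1 d, α k * α k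
      + 2 * ∑ k ∈ Finset.Icc 1 d, β k * β k
      - 2 * (∑ k ∈ Finset.Icc 1 d, α k * β k + ∑ k ∈ Finset.Icc 0 d, α k * β (k + 1))
    ≤ ∑ k ∈ Finset.Icc 1 d, (β k - β (k + 1)) ^ 2 + (α 0 - β 1) ^ 2 := by
  have hsplit : ∑ k ∈ Finset.Icc 0 d, α k * β (k + 1)
      = α 0 * β 1 + ∑ k ∈ Finset.Icc 1 d, α k * β (k + 1) := by
    rw [show Finset.Icc 0 d = insert 0 (Finset.Icc 1 d) by
      ext x; simp only [Finset.mem_Icc, Finset.mem_insert]; omega,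
      Finset.sum_insert (by simp)]
  have e1 : ∑ k ∈ Finset.Icc 1 d,
      ((β k - β (k + 1)) ^ 2 - 2 * (α k * α k) - 2 * (β k * β k)
        + 2 * (α k * β k) + 2 * (α k * β (k + 1)))
      = ∑ k ∈ Finset.Icc 1 d,
        ((β (k + 1) ^ 2 - β k ^ 2) + 2 * ((β k - α k) * (α k - β (k + 1)))) :=
    Finset.sum_congr rfl fun k _ => by ring
  have e2 := telescope_sq β d
  have hnn : 0 ≤ ∑ k ∈ Finset.Icc 1 d, (β k - α k) * (α k - β (k + 1)) :=
    Finset.sum_nonneg fun k hk => by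
      simp only [Finset.mem_Icc] at hk
      obtain ⟨h1, h2⟩ := h k hk.1 hk.2
      exact mul_nonneg (by linarith) (by linarith)
  simp only [Finset.sum_add_distrib, Finset.sum_sub_distrib, ← Finset.mul_sum] at e1 e2
  have hsq : (α 0 - β 1) ^ 2 = α 0 * α 0 - 2 * (α 0 * β 1) + β 1 ^ 2 := by ring
  have hb : β (d + 1) ^ 2 = 0 := by rw [hβd]; ring
  linarith [e1, e2, hnn]
/-- For `V = Σ_{i=0}^{d} n_i·Sym^{2i}(ℂ²)` and `W = Σ_{i=1}^{d} m_i·Sym^{2i-1}(ℂ²)` with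
`a_i = Σ_{j=i}^{d} (n_j − m_j)` satisfying `a_i ≤ 0` and `a_i + m_i ≥ 0` for `1 ≤ i ≤ d`
(i.e. `W ≥ V⁻` and `V ≥ W⁻` in the Young order),
`dim(V⊗V)[0] + dim(W⊗W)[0] − 2·dim(V⊗W)[1] ≤ (m_1² + ⋯ + m_d²) + (a_1+n_0)²`. -/
theorem upper_bound_young_order (d : ℕ) (n m : ℕ → ℕ)
    (ha : ∀ i, 1 ≤ i → i ≤ d → aCoeff d n m i ≤ 0 ∧ 0 ≤ aCoeff d n m i + (m i : ℤ)) :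
    (tensorWtDim (evenRep d n) (evenRep d n) 0 : ℤ)
        + tensorWtDim (oddRep d m) (oddRep d m) 0
        - 2 * tensorWtDim (evenRep d n) (oddRep d m) 1 ≤
      (∑ i ∈ Finset.Icc 1 d, (m i : ℤ) ^ 2) + (aCoeff d n m 1 + (n 0 : ℤ)) ^ 2 := by
  rw [tensor_even_even d n, tensor_odd_odd d m, tensor_even_odd d n m]
  push_cast
  have hβd : (∑ j ∈ Finset.Icc (d + 1) d, (m j : ℤ)) = 0 := by
    rw [Finset.Icc_eq_empty (by omega)]; simp
  have hstep : ∀ i, i ≤ d → (∑ j ∈ Finset.Icc i d, (m j : ℤ))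
      = (m i : ℤ) + ∑ j ∈ Finset.Icc (i + 1) d, (m j : ℤ) := fun i hi => by
    rw [show Finset.Icc i d = insert i (Finset.Icc (i + 1) d) by
      ext x; simp only [Finset.mem_Icc, Finset.mem_insert]; omega,
      Finset.sum_insert (by simp)]
  have hstepn : (∑ j ∈ Finset.Icc 0 d, (n j : ℤ))
      = (n 0 : ℤ) + ∑ j ∈ Finset.Icc 1 d, (n j : ℤ) := by
    rw [show Finset.Icc 0 d = insert 0 (Finset.Icc 1 d) by
      ext x; simp only [Finset.mem_Icc, Finset.mem_insert]; omega,
      Finset.sum_insert (by simp)]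
  have hacoeff : ∀ i, aCoeff d n m i
      = (∑ j ∈ Finset.Icc i d, (n j : ℤ)) - ∑ j ∈ Finset.Icc i d, (m j : ℤ) := fun i => by
    unfold aCoeff; rw [Finset.sum_sub_distrib]
  have hcond : ∀ k, 1 ≤ k → k ≤ d →
      (∑ j ∈ Finset.Icc k d, (n j : ℤ)) ≤ (∑ j ∈ Finset.Icc k d, (m j : ℤ)) ∧
      (∑ j ∈ Finset.Icc (k + 1) d, (m j : ℤ)) ≤ ∑ j ∈ Finset.Icc k d, (n j : ℤ) := by
    intro k h1 h2
    obtain ⟨ha1, ha2⟩ := ha k h1 h2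
    rw [hacoeff] at ha1 ha2
    refine ⟨by linarith, ?_⟩
    have := hstep k h2
    linarith
  have hkey := key_ineq d (fun k => ∑ j ∈ Finset.Icc k d, (n j : ℤ))
    (fun k => ∑ j ∈ Finset.Icc k d, (m j : ℤ)) hβd hcond
  have hm2 : ∑ i ∈ Finset.Icc 1 d, (m i : ℤ) ^ 2
      = ∑ k ∈ Finset.Icc 1 d, ((∑ j ∈ Finset.Icc k d, (m j : ℤ))
          - ∑ j ∈ Finset.Icc (k + 1) d, (m j : ℤ)) ^ 2 :=
    Finset.sum_congr rfl fun i hi => by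
      simp only [Finset.mem_Icc] at hi
      rw [hstep i hi.2]; ring
  have hsq : (aCoeff d n m 1 + (n 0 : ℤ)) ^ 2
      = ((∑ j ∈ Finset.Icc 0 d, (n j : ℤ)) - ∑ j ∈ Finset.Icc 1 d, (m j : ℤ)) ^ 2 := by
    rw [hacoeff, hstepn]; ring
  rw [hm2, hsq]
  linarith [hkey]
end

section
/- Let n_0,…,n_d and m_0,…,m_d be nonnegative integers, and define representations of SU(2): V = Σ_{i=0}^{d} (n_i + m_i)·Sym^{i}(ℂ²) and W = Σ_{i=1}^{d} n_i·Sym^{i−1}(ℂ²) ⊕ Σ_{i=0}^{d} m_i·Sym^{i+1}(ℂ²). Then dim(V⊗V)[0] + dim(W⊗W)[0] − 2·dim(V⊗W)[1] = Σ_{i=0}^{d} (n_i² + m_i²). -/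
/-- Multiplicity function of `V = Σ_{i=0}^{d} (n_i + m_i) · Sym^{i}(ℂ²)`. -/
def exampleV (d : ℕ) (n m : ℕ → ℕ) : ℕ → ℕ :=
  fun j => if j ≤ d then n j + m j else 0

/-- Multiplicity function of
`W = Σ_{i=1}^{d} n_i · Sym^{i-1}(ℂ²) ⊕ Σ_{i=0}^{d} m_i · Sym^{i+1}(ℂ²)`
(with the convention `Sym^{-1}(ℂ²) = 0`, so the `i = 0` term of the first sum is dropped). -/
def exampleW (d : ℕ) (n m : ℕ → ℕ) : ℕ → ℕ :=
  fun j => (if j + 1 ≤ d then n (j + 1) else 0) +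
    (if 1 ≤ j ∧ j - 1 ≤ d then m (j - 1) else 0)

lemma wtDim_eq_sum (ℓ : ℕ → ℕ) (N : ℕ) (h : ∀ i, N ≤ i → ℓ i = 0) (k : ℤ) :
    wtDim ℓ k = ∑ i ∈ Finset.range N,
      if k.natAbs ≤ i ∧ k % 2 = (i : ℤ) % 2 then ℓ i else 0 := by
  apply finsum_eq_finset_sum_of_support_subset
  intro i hi
  simp only [Function.mem_support, ne_eq] at hi
  simp only [Finset.coe_range, Set.mem_Iio]
  by_contra hN
  apply hi
  split
  · exact h i (le_of_not_gt hN)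
  · rfl

lemma wtDim_eq_zero (ℓ : ℕ → ℕ) (N : ℕ) (h : ∀ i, N ≤ i → ℓ i = 0) (k : ℤ)
    (hk : N ≤ k.natAbs) : wtDim ℓ k = 0 := by
  rw [wtDim_eq_sum ℓ N h]
  refine Finset.sum_eq_zero fun i hi => ?_
  rw [if_neg]
  rintro ⟨h1, -⟩
  simp only [Finset.mem_range] at hi
  omega

lemma wtDim_neg (ℓ : ℕ → ℕ) (k : ℤ) : wtDim ℓ (-k) = wtDim ℓ k := by
  unfold wtDim
  exact finsum_congr fun i => if_congr (by omega) rfl rfl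

lemma tensor_eq_sum (ℓ₁ ℓ₂ : ℕ → ℕ) (N : ℕ) (h1 : ∀ i, N ≤ i → ℓ₁ i = 0) (k : ℤ) :
    tensorWtDim ℓ₁ ℓ₂ k = ∑ j ∈ Finset.Icc (-(N : ℤ)) N, wtDim ℓ₁ j * wtDim ℓ₂ (k - j) := by
  apply finsum_eq_finset_sum_of_support_subset
  intro j hj
  simp only [Function.mem_support, ne_eq] at hj
  simp only [Finset.coe_Icc, Set.mem_Icc]
  by_contra hc
  push_neg at hc
  apply hj
  rw [wtDim_eq_zero ℓ₁ N h1 j (by omega), zero_mul]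

lemma suppV (d : ℕ) (n m : ℕ → ℕ) : ∀ i, d + 3 ≤ i → exampleV d n m i = 0 := by
  intro i hi; unfold exampleV; rw [if_neg]; omega

lemma suppW (d : ℕ) (n m : ℕ → ℕ) : ∀ i, d + 2 ≤ i → exampleW d n m i = 0 := by
  intro i hi; unfold exampleW
  rw [if_neg (by omega), if_neg (by omega), add_zero]

lemma sum_shift (f : ℤ → ℤ) (a b : ℤ) :
    ∑ j ∈ Finset.Icc a b, f (j - 1) = ∑ j ∈ Finset.Icc (a - 1) (b - 1), f j := by
  rw [show (a - 1 : ℤ) = a + (-1) by ring, show (b - 1 : ℤ) = b + (-1) by ring,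
    ← Finset.map_add_right_Icc, Finset.sum_map]
  refine Finset.sum_congr rfl fun j _ => ?_
  simp [addRightEmbedding_apply, sub_eq_add_neg]

lemma shiftW (d : ℕ) (n m : ℕ → ℕ) :
    ∑ j ∈ Finset.Icc (-((d : ℤ) + 3)) ((d : ℤ) + 3), (wtDim (exampleW d n m) j : ℤ) ^ 2
      = ∑ j ∈ Finset.Icc (-((d : ℤ) + 3)) ((d : ℤ) + 3),
          (wtDim (exampleW d n m) (j - 1) : ℤ) ^ 2 := by
  have hz : ∀ j : ℤ, d + 2 ≤ j.natAbs → (wtDim (exampleW d n m) j : ℤ) ^ 2 = 0 := by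
    intro j hj
    rw [wtDim_eq_zero _ (d + 2) (suppW d n m) j hj]
    norm_num
  conv_rhs => rw [sum_shift (fun j => (wtDim (exampleW d n m) j : ℤ) ^ 2) (-((d : ℤ) + 3)) ((d : ℤ) + 3)]
  have h1 : ∑ j ∈ Finset.Icc (-((d : ℤ) + 3)) ((d : ℤ) + 3), (wtDim (exampleW d n m) j : ℤ) ^ 2
      = ∑ j ∈ Finset.Icc (-((d : ℤ) + 3) - 1) ((d : ℤ) + 3), (wtDim (exampleW d n m) j : ℤ) ^ 2 := by
    refine Finset.sum_subset (Finset.Icc_subset_Icc (by linarith) le_rfl) fun x hx hx' => ?_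
    simp only [Finset.mem_Icc] at hx hx'
    exact hz x (by omega)
  have h2 : ∑ j ∈ Finset.Icc (-((d : ℤ) + 3) - 1) ((d : ℤ) + 3 - 1), (wtDim (exampleW d n m) j : ℤ) ^ 2
      = ∑ j ∈ Finset.Icc (-((d : ℤ) + 3) - 1) ((d : ℤ) + 3), (wtDim (exampleW d n m) j : ℤ) ^ 2 := by
    refine Finset.sum_subset (Finset.Icc_subset_Icc le_rfl (by linarith)) fun x hx hx' => ?_
    simp only [Finset.mem_Icc] at hx hx'
    exact hz x (by omega)
  rw [h1, h2]

lemma auxIteIteAdd {P q : Prop} [Decidable P] [Decidable q] (x y : ℤ) :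
    (if P then (if q then x + y else 0) else 0) =
      (if P ∧ q then x else 0) + (if P ∧ q then y else 0) := by
  by_cases hP : P <;> by_cases hq : q <;> simp [hP, hq]

lemma auxIteAddIte {P q r : Prop} [Decidable P] [Decidable q] [Decidable r] (x y : ℤ) :
    (if P then ((if q then x else 0) + (if r then y else 0)) else 0) =
      (if P ∧ q then x else 0) + (if P ∧ r then y else 0) := by
  by_cases hP : P <;> by_cases hq : q <;> by_cases hr : r <;> simp [hP, hq, hr]

lemma ite_sub_ite_of_imp {P Q R : Prop} [Decidable P] [Decidable Q] [Decidable R] (x : ℤ)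
    (hQP : Q → P) (hiff : P ∧ ¬Q ↔ R) :
    (if P then x else 0) - (if Q then x else 0) = if R then x else 0 := by
  by_cases hq : Q
  · rw [if_pos hq, if_pos (hQP hq), sub_self, if_neg (fun hr => ((hiff.mpr hr).2) hq)]
  · by_cases hp : P
    · rw [if_pos hp, if_neg hq, if_pos (hiff.mp ⟨hp, hq⟩), sub_zero]
    · rw [if_neg hp, if_neg hq, if_neg (fun hr => hp (hiff.mpr hr).1), sub_zero]

def auxGn (d : ℕ) (n : ℕ → ℕ) (k : ℤ) (i : ℕ) : ℤ :=
  if (k - 1).natAbs + 1 ≤ i ∧ k % 2 = (i : ℤ) % 2 ∧ i ≤ d then (n i : ℤ) else 0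

def auxGm (d : ℕ) (m : ℕ → ℕ) (k : ℤ) (i : ℕ) : ℤ :=
  if (k - 1).natAbs ≤ i + 1 ∧ k % 2 = (i : ℤ) % 2 ∧ i ≤ d then (m i : ℤ) else 0

lemma extract_single (d : ℕ) (f : ℕ → ℕ) (c : ℤ) :
    (∑ i ∈ Finset.range (d + 3), (if (i : ℤ) = c ∧ i ≤ d then (f i : ℤ) else 0))
      = if 0 ≤ c ∧ c ≤ (d : ℤ) then (f c.toNat : ℤ) else 0 := by
  by_cases hc : 0 ≤ c ∧ c ≤ (d : ℤ)
  · rw [if_pos hc,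
      Finset.sum_eq_single_of_mem c.toNat (by simp only [Finset.mem_range]; omega)
        (fun j _ hne => by rw [if_neg]; rintro ⟨h1, -⟩; omega)]
    rw [if_pos ⟨by omega, by omega⟩]
  · rw [if_neg hc]
    refine Finset.sum_eq_zero fun i _ => ?_
    rw [if_neg]
    rintro ⟨h1, h2⟩
    exact hc (by omega)

lemma key (d : ℕ) (n m : ℕ → ℕ) (k : ℤ) :
    (wtDim (exampleV d n m) k : ℤ) - (wtDim (exampleW d n m) (k - 1) : ℤ)
      = (if -(d : ℤ) ≤ k ∧ k ≤ 0 then (n (-k).toNat : ℤ) else 0)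
      - (if 2 ≤ k ∧ k ≤ (d : ℤ) + 2 then (m (k - 2).toNat : ℤ) else 0) := by
  rw [wtDim_eq_sum _ (d + 3) (suppV d n m) k,
      wtDim_eq_sum _ (d + 3) (fun i hi => suppW d n m i (by omega)) (k - 1)]
  push_cast
  simp only [exampleV, exampleW]
  push_cast
  rw [Finset.sum_congr rfl (fun i (_ : i ∈ Finset.range (d + 3)) => auxIteIteAdd (P := k.natAbs ≤ i ∧ k % 2 = (i : ℤ) % 2) (q := i ≤ d) ((n i : ℤ)) ((m i : ℤ))),
      Finset.sum_congr rfl (fun j (_ : j ∈ Finset.range (d + 3)) => auxIteAddIte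
        (P := (k - 1).natAbs ≤ j ∧ (k - 1) % 2 = (j : ℤ) % 2) (q := j + 1 ≤ d)
        (r := 1 ≤ j ∧ j - 1 ≤ d) ((n (j + 1) : ℤ)) ((m (j - 1) : ℤ))),
      Finset.sum_add_distrib, Finset.sum_add_distrib]
  -- reindex n-part of W
  have hBn : (∑ j ∈ Finset.range (d + 3),
      if ((k - 1).natAbs ≤ j ∧ (k - 1) % 2 = (j : ℤ) % 2) ∧ j + 1 ≤ d
        then (n (j + 1) : ℤ) else 0)
      = ∑ i ∈ Finset.range (d + 3), auxGn d n k i := by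
    have h0 : auxGn d n k 0 = 0 := by simp only [auxGn]; rw [if_neg]; omega
    have htop : auxGn d n k (d + 3) = 0 := by simp only [auxGn]; rw [if_neg]; omega
    calc (∑ j ∈ Finset.range (d + 3),
          if ((k - 1).natAbs ≤ j ∧ (k - 1) % 2 = (j : ℤ) % 2) ∧ j + 1 ≤ d
            then (n (j + 1) : ℤ) else 0)
        = ∑ j ∈ Finset.range (d + 3), auxGn d n k (j + 1) := by
          refine Finset.sum_congr rfl fun j _ => ?_
          simp only [auxGn]
          refine if_congr ?_ (by norm_cast) rfl
          push_cast
          omega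
      _ = ∑ i ∈ Finset.range (d + 4), auxGn d n k i := by
          rw [Finset.sum_range_succ' (auxGn d n k) (d + 3), h0, add_zero]
      _ = ∑ i ∈ Finset.range (d + 3), auxGn d n k i := by
          rw [Finset.sum_range_succ, htop, add_zero]
  -- reindex m-part of W
  have hBm : (∑ j ∈ Finset.range (d + 3),
      if ((k - 1).natAbs ≤ j ∧ (k - 1) % 2 = (j : ℤ) % 2) ∧ 1 ≤ j ∧ j - 1 ≤ d
        then (m (j - 1) : ℤ) else 0)
      = ∑ i ∈ Finset.range (d + 3), auxGm d m k i := by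
    have htop : auxGm d m k (d + 2) = 0 := by simp only [auxGm]; rw [if_neg]; omega
    calc (∑ j ∈ Finset.range (d + 3),
          if ((k - 1).natAbs ≤ j ∧ (k - 1) % 2 = (j : ℤ) % 2) ∧ 1 ≤ j ∧ j - 1 ≤ d
            then (m (j - 1) : ℤ) else 0)
        = (∑ x ∈ Finset.range (d + 2),
            if ((k - 1).natAbs ≤ x + 1 ∧ (k - 1) % 2 = ((x + 1 : ℕ) : ℤ) % 2)
                ∧ 1 ≤ x + 1 ∧ (x + 1) - 1 ≤ d then (m ((x + 1) - 1) : ℤ) else 0)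
            + (if ((k - 1).natAbs ≤ 0 ∧ (k - 1) % 2 = ((0 : ℕ) : ℤ) % 2)
                ∧ 1 ≤ 0 ∧ 0 - 1 ≤ d then (m (0 - 1) : ℤ) else 0) :=
          Finset.sum_range_succ' _ (d + 2)
      _ = ∑ x ∈ Finset.range (d + 2), auxGm d m k x := by
          rw [if_neg (by omega), add_zero]
          refine Finset.sum_congr rfl fun x _ => ?_
          simp only [auxGm, Nat.add_sub_cancel]
          refine if_congr ?_ rfl rfl
          push_cast
          simp only [true_and, and_true]
          omega
      _ = ∑ i ∈ Finset.range (d + 3), auxGm d m k i := by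
          conv_rhs => rw [Finset.sum_range_succ]
          rw [htop, add_zero]
  rw [hBn, hBm]
  have hn : (∑ i ∈ Finset.range (d + 3),
      if (k.natAbs ≤ i ∧ k % 2 = (i : ℤ) % 2) ∧ i ≤ d then (n i : ℤ) else 0)
      - (∑ i ∈ Finset.range (d + 3), auxGn d n k i)
      = if -(d : ℤ) ≤ k ∧ k ≤ 0 then (n (-k).toNat : ℤ) else 0 := by
    rw [← Finset.sum_sub_distrib]
    have : ∀ i ∈ Finset.range (d + 3),
        ((if (k.natAbs ≤ i ∧ k % 2 = (i : ℤ) % 2) ∧ i ≤ d then (n i : ℤ) else 0)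
          - auxGn d n k i)
        = if (i : ℤ) = -k ∧ i ≤ d then (n i : ℤ) else 0 := by
      intro i _
      simp only [auxGn]
      exact ite_sub_ite_of_imp _ (by omega) (by omega)
    rw [Finset.sum_congr rfl this, extract_single]
    exact if_congr (by omega) (by rw [show -k = (0 : ℤ) - k by ring]) rfl
  have hm : (∑ i ∈ Finset.range (d + 3),
      if (k.natAbs ≤ i ∧ k % 2 = (i : ℤ) % 2) ∧ i ≤ d then (m i : ℤ) else 0)
      - (∑ i ∈ Finset.range (d + 3), auxGm d m k i)
      = -(if 2 ≤ k ∧ k ≤ (d : ℤ) + 2 then (m (k - 2).toNat : ℤ) else 0) := by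
    rw [← Finset.sum_sub_distrib, ← neg_eq_iff_eq_neg, ← Finset.sum_neg_distrib]
    have : ∀ i ∈ Finset.range (d + 3),
        (-((if (k.natAbs ≤ i ∧ k % 2 = (i : ℤ) % 2) ∧ i ≤ d then (m i : ℤ) else 0)
          - auxGm d m k i))
        = if (i : ℤ) = k - 2 ∧ i ≤ d then (m i : ℤ) else 0 := by
      intro i _
      simp only [auxGm, neg_sub]
      exact ite_sub_ite_of_imp _ (by omega) (by omega)
    rw [Finset.sum_congr rfl this, extract_single]
    exact if_congr (by omega) rfl rfl
  linarith [hn, hm]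


/-- For `V = Σ_{i=0}^{d} (n_i + m_i)·Sym^{i}(ℂ²)` and
`W = Σ_{i=1}^{d} n_i·Sym^{i-1}(ℂ²) ⊕ Σ_{i=0}^{d} m_i·Sym^{i+1}(ℂ²)`,
`dim(V⊗V)[0] + dim(W⊗W)[0] − 2·dim(V⊗W)[1] = Σ_{i=0}^{d} (n_i² + m_i²)`. -/
theorem example_exact_value (d : ℕ) (n m : ℕ → ℕ) :
    (tensorWtDim (exampleV d n m) (exampleV d n m) 0 : ℤ)
        + tensorWtDim (exampleW d n m) (exampleW d n m) 0
        - 2 * tensorWtDim (exampleV d n m) (exampleW d n m) 1 =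
      ∑ i ∈ Finset.range (d + 1), ((n i : ℤ) ^ 2 + (m i : ℤ) ^ 2) := by
  have hW' : ∀ i, d + 3 ≤ i → exampleW d n m i = 0 := fun i hi => suppW d n m i (by omega)
  rw [tensor_eq_sum _ _ (d + 3) (suppV d n m) 0,
      tensor_eq_sum _ _ (d + 3) hW' 0,
      tensor_eq_sum _ _ (d + 3) (suppV d n m) 1]
  push_cast
  have e1 : ∑ j ∈ Finset.Icc (-((d : ℤ) + 3)) ((d : ℤ) + 3),
        (wtDim (exampleV d n m) j : ℤ) * (wtDim (exampleV d n m) (0 - j) : ℤ)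
      = ∑ j ∈ Finset.Icc (-((d : ℤ) + 3)) ((d : ℤ) + 3), (wtDim (exampleV d n m) j : ℤ) ^ 2 :=
    Finset.sum_congr rfl fun j _ => by
      rw [show (0 : ℤ) - j = -j by ring, wtDim_neg]; ring
  have e2 : ∑ j ∈ Finset.Icc (-((d : ℤ) + 3)) ((d : ℤ) + 3),
        (wtDim (exampleW d n m) j : ℤ) * (wtDim (exampleW d n m) (0 - j) : ℤ)
      = ∑ j ∈ Finset.Icc (-((d : ℤ) + 3)) ((d : ℤ) + 3), (wtDim (exampleW d n m) j : ℤ) ^ 2 :=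
    Finset.sum_congr rfl fun j _ => by
      rw [show (0 : ℤ) - j = -j by ring, wtDim_neg]; ring
  have e3 : ∑ j ∈ Finset.Icc (-((d : ℤ) + 3)) ((d : ℤ) + 3),
        (wtDim (exampleV d n m) j : ℤ) * (wtDim (exampleW d n m) (1 - j) : ℤ)
      = ∑ j ∈ Finset.Icc (-((d : ℤ) + 3)) ((d : ℤ) + 3),
        (wtDim (exampleV d n m) j : ℤ) * (wtDim (exampleW d n m) (j - 1) : ℤ) :=
    Finset.sum_congr rfl fun j _ => by
      rw [show (1 : ℤ) - j = -(j - 1) by ring, wtDim_neg]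
  rw [e1, e2, e3, shiftW d n m, Finset.mul_sum, ← Finset.sum_add_distrib,
    ← Finset.sum_sub_distrib]
  have e4 : ∀ j ∈ Finset.Icc (-((d : ℤ) + 3)) ((d : ℤ) + 3),
      ((wtDim (exampleV d n m) j : ℤ) ^ 2 + (wtDim (exampleW d n m) (j - 1) : ℤ) ^ 2
        - 2 * ((wtDim (exampleV d n m) j : ℤ) * (wtDim (exampleW d n m) (j - 1) : ℤ)))
      = (if -(d : ℤ) ≤ j ∧ j ≤ 0 then ((n (-j).toNat : ℤ)) ^ 2 else 0)
        + (if 2 ≤ j ∧ j ≤ (d : ℤ) + 2 then ((m (j - 2).toNat : ℤ)) ^ 2 else 0) := by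
    intro j _
    have hk := key d n m j
    calc (wtDim (exampleV d n m) j : ℤ) ^ 2 + (wtDim (exampleW d n m) (j - 1) : ℤ) ^ 2
          - 2 * ((wtDim (exampleV d n m) j : ℤ) * (wtDim (exampleW d n m) (j - 1) : ℤ))
        = ((wtDim (exampleV d n m) j : ℤ) - (wtDim (exampleW d n m) (j - 1) : ℤ)) ^ 2 := by ring
      _ = ((if -(d : ℤ) ≤ j ∧ j ≤ 0 then (n (-j).toNat : ℤ) else 0)
            - (if 2 ≤ j ∧ j ≤ (d : ℤ) + 2 then (m (j - 2).toNat : ℤ) else 0)) ^ 2 := by rw [hk]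
      _ = (if -(d : ℤ) ≤ j ∧ j ≤ 0 then ((n (-j).toNat : ℤ)) ^ 2 else 0)
            + (if 2 ≤ j ∧ j ≤ (d : ℤ) + 2 then ((m (j - 2).toNat : ℤ)) ^ 2 else 0) := by
          split_ifs with h1 h2 h3
          · exact absurd h2.1 (by omega)
          · ring
          · ring
          · ring
  rw [Finset.sum_congr rfl e4, Finset.sum_add_distrib]
  have hn : ∑ j ∈ Finset.Icc (-((d : ℤ) + 3)) ((d : ℤ) + 3),
        (if -(d : ℤ) ≤ j ∧ j ≤ 0 then ((n (-j).toNat : ℤ)) ^ 2 else 0)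
      = ∑ i ∈ Finset.range (d + 1), (n i : ℤ) ^ 2 := by
    rw [← Finset.sum_filter]
    have hfil : (Finset.Icc (-((d : ℤ) + 3)) ((d : ℤ) + 3)).filter
        (fun j => -(d : ℤ) ≤ j ∧ j ≤ 0) = Finset.Icc (-(d : ℤ)) 0 := by
      ext x
      simp only [Finset.mem_filter, Finset.mem_Icc]
      omega
    rw [hfil]
    refine Finset.sum_nbij' (fun j => (-j).toNat) (fun i => -(i : ℤ)) ?_ ?_ ?_ ?_ ?_
    · intro a ha; simp only [Finset.mem_Icc] at ha; simp only [Finset.mem_range]; omega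
    · intro a ha; simp only [Finset.mem_range] at ha; simp only [Finset.mem_Icc]; omega
    · intro a ha
      simp only [Finset.mem_Icc] at ha
      show -(((-a).toNat : ℤ)) = a
      omega
    · intro a ha
      simp only [Finset.mem_range] at ha
      show (-(-(a : ℤ))).toNat = a
      omega
    · intro a _; rfl
  have hm : ∑ j ∈ Finset.Icc (-((d : ℤ) + 3)) ((d : ℤ) + 3),
        (if 2 ≤ j ∧ j ≤ (d : ℤ) + 2 then ((m (j - 2).toNat : ℤ)) ^ 2 else 0)
      = ∑ i ∈ Finset.range (d + 1), (m i : ℤ) ^ 2 := by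
    rw [← Finset.sum_filter]
    have hfil : (Finset.Icc (-((d : ℤ) + 3)) ((d : ℤ) + 3)).filter
        (fun j => 2 ≤ j ∧ j ≤ (d : ℤ) + 2) = Finset.Icc (2 : ℤ) ((d : ℤ) + 2) := by
      ext x
      simp only [Finset.mem_filter, Finset.mem_Icc]
      omega
    rw [hfil]
    refine Finset.sum_nbij' (fun j => (j - 2).toNat) (fun i => (i : ℤ) + 2) ?_ ?_ ?_ ?_ ?_
    · intro a ha; simp only [Finset.mem_Icc] at ha; simp only [Finset.mem_range]; omega
    · intro a ha; simp only [Finset.mem_range] at ha; simp only [Finset.mem_Icc]; omega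
    · intro a ha
      simp only [Finset.mem_Icc] at ha
      show (((a - 2).toNat : ℤ)) + 2 = a
      omega
    · intro a ha
      simp only [Finset.mem_range] at ha
      show (((a : ℤ) + 2) - 2).toNat = a
      omega
    · intro a _; rfl
  rw [hn, hm, ← Finset.sum_add_distrib]
end
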